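/- Let ψ : ℝⁿ → ℝ be convex of class C² with D²ψ ≥ M·Id for some M > 0, C = ψ^{−1}((−∞,1]) with nonempty interior. Then there exists β > 0 such that ψ(x) − 1 ≥ β · d(x,C) for every x ∉ C. -/

import Mathlib

open Metric Set

lemma taylor_aux {n : ℕ} (ψ : EuclideanSpace ℝ (Fin n) → ℝ) (M : ℝ)
    (hψ : ContDiff ℝ 2 ψ)
    (hhess : ∀ x v, ‖v‖ = 1 → M ≤ iteratedFDeriv ℝ 2 ψ x (fun _ => v))
    (a v : EuclideanSpace ℝ (Fin n)) (hv : ‖v‖ = 1) (s : ℝ) (hs : 0 ≤ s) :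
    ψ a + fderiv ℝ ψ a v * s + M / 2 * s ^ 2 ≤ ψ (a + s • v) := by
  have hψd : Differentiable ℝ ψ := hψ.differentiable (by norm_num)
  have hψ' : ContDiff ℝ 1 (fderiv ℝ ψ) := hψ.fderiv_right (by norm_num)
  have hψ'd : Differentiable ℝ (fderiv ℝ ψ) := hψ'.differentiable (by norm_num)
  set L : ℝ → EuclideanSpace ℝ (Fin n) := fun t => a + t • v with hLdef
  have hL : ∀ t : ℝ, HasDerivAt L v t := fun t => by
    simpa [hLdef] using ((hasDerivAt_id t).smul_const v).const_add a
  have hg : ∀ t, HasDerivAt (fun t => ψ (L t)) (fderiv ℝ ψ (L t) v) t := fun t =>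
    (hψd (L t)).hasFDerivAt.comp_hasDerivAt t (hL t)
  have hg1 : ∀ t, HasDerivAt (fun t => fderiv ℝ ψ (L t) v)
      (fderiv ℝ (fderiv ℝ ψ) (L t) v v) t := fun t => by
    have h1 : HasDerivAt (fun t => fderiv ℝ ψ (L t)) (fderiv ℝ (fderiv ℝ ψ) (L t) v) t :=
      (hψ'd (L t)).hasFDerivAt.comp_hasDerivAt t (hL t)
    simpa using h1.clm_apply (hasDerivAt_const t v)
  have hMle : ∀ t : ℝ, M ≤ fderiv ℝ (fderiv ℝ ψ) (L t) v v := fun t => by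
    have h := hhess (L t) v hv
    rwa [iteratedFDeriv_two_apply] at h
  have hL0 : L 0 = a := by simp [hLdef]
  -- first derivative grows at least linearly
  have hφd : ∀ t : ℝ, HasDerivAt (fun t => fderiv ℝ ψ (L t) v - M * t)
      (fderiv ℝ (fderiv ℝ ψ) (L t) v v - M) t := fun t => by
    exact ((hg1 t).sub ((hasDerivAt_id t).const_mul M)).congr_deriv (by simp)
  have hφmono : Monotone (fun t => fderiv ℝ ψ (L t) v - M * t) := by
    apply monotone_of_deriv_nonneg
    · exact fun t => (hφd t).differentiableAt
    · intro t; rw [(hφd t).deriv]; linarith [hMle t]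
  have hstep : ∀ t : ℝ, 0 ≤ t → fderiv ℝ ψ a v + M * t ≤ fderiv ℝ ψ (L t) v := by
    intro t ht
    have := hφmono ht
    simp only [hL0, mul_zero, sub_zero] at this
    linarith
  -- integrate once more
  set h : ℝ → ℝ := fun t => ψ (L t) - (ψ a + fderiv ℝ ψ a v * t + M / 2 * t ^ 2) with hhdef
  have hhd : ∀ t : ℝ, HasDerivAt h (fderiv ℝ ψ (L t) v - (fderiv ℝ ψ a v + M * t)) t := by
    intro t
    have h2 : HasDerivAt (fun t : ℝ => ψ a + fderiv ℝ ψ a v * t + M / 2 * t ^ 2)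
        (fderiv ℝ ψ a v + M * t) t := by
      have h3 : HasDerivAt (fun t : ℝ => M / 2 * t ^ 2) (M / 2 * (2 * t ^ 1)) t :=
        (hasDerivAt_pow 2 t).const_mul (M / 2)
      have h4 : HasDerivAt (fun t : ℝ => ψ a + fderiv ℝ ψ a v * t) (fderiv ℝ ψ a v) t := by
        simpa using ((hasDerivAt_id t).const_mul (fderiv ℝ ψ a v)).const_add (ψ a)
      exact (h4.add h3).congr_deriv (by ring)
    exact (hg t).sub h2
  have hmono : MonotoneOn h (Set.Ici (0:ℝ)) := by
    apply monotoneOn_of_deriv_nonneg (convex_Ici 0)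
    · exact (fun t _ => (hhd t).differentiableAt.continuousAt.continuousWithinAt)
    · exact fun t _ => (hhd t).differentiableAt.differentiableWithinAt
    · intro t ht
      rw [interior_Ici] at ht
      rw [(hhd t).deriv]
      linarith [hstep t ht.le]
  have := hmono Set.self_mem_Ici hs hs
  simp only [hhdef, hL0, mul_zero, ne_eq, OfNat.ofNat_ne_zero, not_false_eq_true, zero_pow,
    add_zero, sub_self] at this
  have h0 : (0:ℝ) ≤ ψ (L s) - (ψ a + fderiv ℝ ψ a v * s + M / 2 * s ^ 2) := by
    simpa using this
  simpa [hLdef] using h0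


/-- Let `ψ : ℝⁿ → ℝ` be convex of class `C²` with `D²ψ ≥ M > 0`, and `C = ψ⁻¹((-∞,1])` with
nonempty interior. Then there exists `β > 0` with `ψ(x) - 1 ≥ β d(x,C)` for every `x ∉ C`. -/
theorem stmt_14 {n : ℕ} (ψ : EuclideanSpace ℝ (Fin n) → ℝ) (M : ℝ) (hM : 0 < M)
    (hψ : ContDiff ℝ 2 ψ) (hψconv : ConvexOn ℝ Set.univ ψ)
    (hhess : ∀ x v, ‖v‖ = 1 → M ≤ iteratedFDeriv ℝ 2 ψ x (fun _ => v))
    (hint : (interior (ψ ⁻¹' Set.Iic 1)).Nonempty) :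
    ∃ β > (0:ℝ), ∀ x ∉ ψ ⁻¹' Set.Iic 1,
      β * Metric.infDist x (ψ ⁻¹' Set.Iic 1) ≤ ψ x - 1 := by
  have taylor : ∀ (a v : EuclideanSpace ℝ (Fin n)), ‖v‖ = 1 → ∀ s : ℝ, 0 ≤ s →
      ψ a + fderiv ℝ ψ a v * s + M / 2 * s ^ 2 ≤ ψ (a + s • v) :=
    fun a v hv s hs => taylor_aux ψ M hψ hhess a v hv s hs
  set C := ψ ⁻¹' Set.Iic 1 with hC
  obtain ⟨x₀, hx₀⟩ := hint
  obtain ⟨r, hr0, hball⟩ := Metric.isOpen_iff.mp isOpen_interior x₀ hx₀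
  have hballC : Metric.ball x₀ r ⊆ C := hball.trans interior_subset
  set K : ℝ := ‖fderiv ℝ ψ x₀‖ with hK
  have hK0 : 0 ≤ K := norm_nonneg _
  set δ : ℝ := M / 2 * (r / 2) ^ 2 with hδ
  have hδ0 : 0 < δ := by positivity
  set R : ℝ := 2 * (K + 1) / M with hR
  have hR0 : 0 < R := by positivity
  refine ⟨min 1 (δ / R), lt_min one_pos (by positivity), ?_⟩
  set β := min 1 (δ / R) with hβ
  have hβ0 : 0 < β := lt_min one_pos (by positivity)
  intro x hx
  have hx1 : 1 < ψ x := by simpa [hC] using hx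
  have hxne : x ≠ x₀ := by
    intro h
    have : x₀ ∈ C := interior_subset hx₀
    rw [← h] at this
    exact hx this
  set s : ℝ := ‖x - x₀‖ with hs
  have hs0 : 0 < s := by simpa [hs] using sub_ne_zero_of_ne hxne
  set v : EuclideanSpace ℝ (Fin n) := s⁻¹ • (x - x₀) with hv
  have hvnorm : ‖v‖ = 1 := by
    rw [hv, norm_smul, norm_inv, norm_norm, ← hs, inv_mul_cancel₀ hs0.ne']
  have hxeq : x = x₀ + s • v := by
    rw [hv, smul_inv_smul₀ hs0.ne']
    abel
  -- ψ x₀ ≤ 1 - δ, using a unit vector with nonnegative directional derivative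
  have hψx₀ : ψ x₀ ≤ 1 - δ := by
    set u := if 0 ≤ fderiv ℝ ψ x₀ v then v else -v with hu
    have hunorm : ‖u‖ = 1 := by
      rw [hu]; split <;> simp [hvnorm]
    have huder : 0 ≤ fderiv ℝ ψ x₀ u := by
      rw [hu]; split
      · assumption
      · rw [map_neg]; push_neg at *; linarith
    have hmem : x₀ + (r / 2) • u ∈ Metric.ball x₀ r := by
      have : dist (x₀ + (r / 2) • u) x₀ = r / 2 := by
        rw [dist_eq_norm]
        simp only [add_sub_cancel_left, norm_smul, hunorm, mul_one, Real.norm_eq_abs]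
        rw [abs_of_pos (by linarith : (0:ℝ) < r / 2)]
      rw [Metric.mem_ball, this]; linarith
    have h1 : ψ (x₀ + (r / 2) • u) ≤ 1 := hballC hmem
    have h2 := taylor x₀ u hunorm (r / 2) (by linarith)
    have h3 : 0 ≤ fderiv ℝ ψ x₀ u * (r / 2) := mul_nonneg huder (by linarith)
    rw [hδ]; linarith
  -- growth: ψ x - ψ x₀ ≥ -K s + M/2 s²
  have hder : -K ≤ fderiv ℝ ψ x₀ v := by
    have h := (fderiv ℝ ψ x₀).le_opNorm v
    rw [hvnorm, mul_one, Real.norm_eq_abs] at h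
    have := (abs_le.mp h).1
    linarith
  have hgrowth : -K * s + M / 2 * s ^ 2 ≤ ψ x - ψ x₀ := by
    have h2 := taylor x₀ v hvnorm s hs0.le
    rw [← hxeq] at h2
    nlinarith [hs0.le]
  set D : ℝ := ψ x - ψ x₀ with hD
  have hDδ : δ ≤ D := by rw [hD]; linarith
  have hD0 : 0 < D := lt_of_lt_of_le hδ0 hDδ
  -- convexity: point on segment in C
  set t : ℝ := (ψ x - 1) / D with ht
  have ht0 : 0 < t := div_pos (by linarith) hD0
  have ht1 : t ≤ 1 := by
    rw [ht, div_le_one hD0, hD]; linarith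
  have htD : t * D = ψ x - 1 := div_mul_cancel₀ _ hD0.ne'
  set z := (1 - t) • x + t • x₀ with hz
  have hzC : z ∈ C := by
    have h1 := hψconv.2 (Set.mem_univ x) (Set.mem_univ x₀) (by linarith : (0:ℝ) ≤ 1 - t)
      ht0.le (by ring)
    have : ψ z ≤ (1 - t) * ψ x + t * ψ x₀ := h1
    have heq : (1 - t) * ψ x + t * ψ x₀ = ψ x - t * D := by rw [hD]; ring
    rw [hC]
    simp only [Set.mem_preimage, Set.mem_Iic]
    rw [heq, htD] at this
    linarith
  have hdist : Metric.infDist x C ≤ t * s := by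
    have h1 : dist x z = t * s := by
      rw [dist_eq_norm, hz]
      have : x - ((1 - t) • x + t • x₀) = t • (x - x₀) := by
        rw [sub_smul, one_smul, smul_sub]; abel
      rw [this, norm_smul, Real.norm_eq_abs, abs_of_pos ht0, hs]
    exact h1 ▸ Metric.infDist_le_dist_of_mem hzC
  -- key claim : β * s ≤ D
  have hclaim : β * s ≤ D := by
    rcases le_or_gt s R with hsR | hsR
    · have h1 : β * s ≤ δ / R * s := mul_le_mul_of_nonneg_right (min_le_right _ _) hs0.le
      have h2 : δ / R * s ≤ δ / R * R := mul_le_mul_of_nonneg_left hsR (by positivity)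
      have h3 : δ / R * R = δ := div_mul_cancel₀ _ hR0.ne'
      linarith
    · have h1 : β * s ≤ 1 * s := mul_le_mul_of_nonneg_right (min_le_left _ _) hs0.le
      have hMR : M / 2 * R = K + 1 := by
        rw [hR]; field_simp
      have h2 : s ≤ D := by
        nlinarith [hgrowth, hs0.le, hsR.le, mul_le_mul_of_nonneg_left hsR.le (le_of_lt (by positivity : (0:ℝ) < M/2))]
      linarith
  -- finish
  calc β * Metric.infDist x C ≤ β * (t * s) :=
        mul_le_mul_of_nonneg_left hdist hβ0.le
    _ = t * (β * s) := by ring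
    _ ≤ t * D := mul_le_mul_of_nonneg_left hclaim ht0.le
    _ = ψ x - 1 := htD
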